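/- Fix k ≥ 2 and t ∈ [0,1], and define f(x₁,…,x_{k−1}) = (2 − k + ∑_{m=1}^{k−1} 1/x_m)·∏_{m=1}^{k−1} x_m on (0,1]^{k−1} subject to ∏_{m=1}^{k−1} x_m = t. Then for t > 0, the supremum of f over this constrained set equals 1, and the infimum equals (k−1)·t^{1−1/(k−1)} + (2−k)·t. -/

import Mathlib

open Real

private lemma sum_prod_erase_le {ι : Type*} [DecidableEq ι] (s : Finset ι) (x : ι → ℝ)
    (hx : ∀ i ∈ s, x i ∈ Set.Icc (0 : ℝ) 1) :
    ∑ i ∈ s, ∏ j ∈ s.erase i, x j ≤ 1 + ((s.card : ℝ) - 1) * ∏ j ∈ s, x j := by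
  induction s using Finset.induction_on with
  | empty => simp
  | @insert a s ha ih =>
    have hxs : ∀ i ∈ s, x i ∈ Set.Icc (0 : ℝ) 1 := fun i hi => hx i (Finset.mem_insert_of_mem hi)
    have hxa : x a ∈ Set.Icc (0 : ℝ) 1 := hx a (Finset.mem_insert_self a s)
    have hP0 : (0 : ℝ) ≤ ∏ j ∈ s, x j := Finset.prod_nonneg fun i hi => (hxs i hi).1
    have hP1 : ∏ j ∈ s, x j ≤ 1 := Finset.prod_le_one (fun i hi => (hxs i hi).1)
      (fun i hi => (hxs i hi).2)
    have ih' := ih hxs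
    rw [Finset.sum_insert ha, Finset.erase_insert ha]
    have hrw : ∀ i ∈ s, ∏ j ∈ (insert a s).erase i, x j = x a * ∏ j ∈ s.erase i, x j := by
      intro i hi
      rw [Finset.erase_insert_of_ne (by rintro rfl; exact ha hi),
        Finset.prod_insert (fun h => ha (Finset.mem_of_mem_erase h))]
    rw [Finset.sum_congr rfl hrw, ← Finset.mul_sum, Finset.card_insert_of_notMem ha,
      Finset.prod_insert ha]
    have h2 : x a * ∑ i ∈ s, ∏ j ∈ s.erase i, x j ≤ x a * (1 + ((s.card : ℝ) - 1) * ∏ j ∈ s, x j) :=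
      mul_le_mul_of_nonneg_left ih' hxa.1
    push_cast
    nlinarith [hxa.1, hxa.2, hP0, hP1]

theorem theta_one_constrained_optimization (k : ℕ) (hk : 2 ≤ k)
    (t : ℝ) (ht : t ∈ Set.Icc (0 : ℝ) 1) (ht0 : 0 < t) :
    let S : Set ℝ := {y | ∃ x : Fin (k - 1) → ℝ,
      (∀ m, x m ∈ Set.Ioc (0 : ℝ) 1) ∧ (∏ m, x m = t) ∧
      y = (2 - (k : ℝ) + ∑ m, 1 / x m) * ∏ m, x m}
    sSup S = 1 ∧
    sInf S = ((k : ℝ) - 1) * t ^ (1 - 1 / ((k : ℝ) - 1)) + (2 - (k : ℝ)) * t := by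
  intro S
  have hn : 0 < k - 1 := by omega
  have hncast : ((k - 1 : ℕ) : ℝ) = (k : ℝ) - 1 := by
    push_cast [Nat.cast_sub (by omega : 1 ≤ k)]; ring
  have hnR : (0 : ℝ) < (k : ℝ) - 1 := by
    rw [← hncast]; exact_mod_cast hn
  have hne : Nonempty (Fin (k - 1)) := ⟨⟨0, hn⟩⟩
  -- rewrite any member of S
  have hmem : ∀ y ∈ S, ∃ x : Fin (k - 1) → ℝ,
      (∀ m, x m ∈ Set.Ioc (0 : ℝ) 1) ∧ (∏ m, x m = t) ∧
      y = (2 - (k : ℝ)) * t + ∑ m, ∏ j ∈ Finset.univ.erase m, x j := by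
    rintro y ⟨x, hx, hprod, rfl⟩
    refine ⟨x, hx, hprod, ?_⟩
    rw [hprod, add_mul, Finset.sum_mul]
    congr 1
    refine Finset.sum_congr rfl fun m _ => ?_
    rw [← hprod, ← Finset.mul_prod_erase Finset.univ x (Finset.mem_univ m)]
    field_simp [(hx m).1.ne']
  -- upper bound
  have hub : ∀ y ∈ S, y ≤ 1 := by
    intro y hy
    obtain ⟨x, hx, hprod, rfl⟩ := hmem y hy
    have key := sum_prod_erase_le Finset.univ x
      (fun i _ => ⟨(hx i).1.le, (hx i).2⟩)
    rw [hprod] at key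
    simp only [Finset.card_univ, Fintype.card_fin] at key
    rw [hncast] at key
    nlinarith
  -- 1 ∈ S
  have h1 : (1 : ℝ) ∈ S := by
    classical
    refine ⟨fun i => if i = ⟨0, hn⟩ then t else 1, fun m => ?_, ?_, ?_⟩
    · by_cases h : m = ⟨0, hn⟩ <;> simp [h, ht0, ht.1, ht.2, ht0.le]
    · rw [Finset.prod_ite_eq' Finset.univ (⟨0, hn⟩ : Fin (k - 1)) (fun _ => t)]
      · simp
    · rw [Finset.prod_ite_eq' Finset.univ (⟨0, hn⟩ : Fin (k - 1)) (fun _ => t)]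
      simp only [Finset.mem_univ, if_true]
      have hsum : ∑ m : Fin (k - 1), (1 : ℝ) / (if m = ⟨0, hn⟩ then t else 1)
          = 1 / t + ((k : ℝ) - 2) := by
        rw [Finset.sum_eq_add_sum_sdiff_singleton_of_mem (Finset.mem_univ (⟨0, hn⟩ : Fin (k - 1)))]
        simp only [if_pos rfl]
        congr 1
        rw [Finset.sum_congr rfl (fun m hm => by
          rw [if_neg (by simpa using (Finset.mem_sdiff.mp hm).2)]),
          Finset.sum_const, Finset.card_sdiff_of_subset (by simp)]
        simp only [Finset.card_univ, Fintype.card_fin, Finset.card_singleton, nsmul_eq_mul,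
          mul_one, div_one]
        have : ((k - 1 - 1 : ℕ) : ℝ) = (k : ℝ) - 2 := by
          push_cast [Nat.cast_sub (by omega : 1 ≤ k - 1), hncast]; ring
        rw [this]
      rw [hsum]
      field_simp
      ring
  -- lower bound value
  set B : ℝ := ((k : ℝ) - 1) * t ^ (1 - 1 / ((k : ℝ) - 1)) + (2 - (k : ℝ)) * t with hB
  set c : ℝ := 1 / ((k : ℝ) - 1) with hc
  have hc0 : 0 ≤ c := le_of_lt (by rw [hc]; positivity)
  have hrpow_prod : ∏ _m : Fin (k - 1), t ^ c = t := by
    rw [Finset.prod_const, Finset.card_univ, Fintype.card_fin, ← Real.rpow_natCast _ (k - 1),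
      ← Real.rpow_mul ht0.le, hncast, hc, one_div_mul_cancel hnR.ne', Real.rpow_one]
  have htc : t * t ^ (-c) = t ^ (1 - c) := by
    rw [sub_eq_add_neg, Real.rpow_add ht0, Real.rpow_one]
  have hlb : ∀ y ∈ S, B ≤ y := by
    rintro y ⟨x, hx, hprod, rfl⟩
    have hxpos : ∀ m, 0 < x m := fun m => (hx m).1
    have hw : ∑ _i : Fin (k - 1), c = 1 := by
      rw [Finset.sum_const, Finset.card_univ, Fintype.card_fin, nsmul_eq_mul, hncast, hc]
      field_simp
    have amgm := Real.geom_mean_le_arith_mean_weighted Finset.univ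
      (fun _ => c) (fun m => 1 / x m)
      (fun i _ => hc0) hw (fun i _ => one_div_nonneg.2 (hxpos i).le)
    have hgm : ∏ i : Fin (k - 1), (1 / x i) ^ c = t ^ (-c) := by
      have hp : ∏ i : Fin (k - 1), 1 / x i = t⁻¹ := by
        simp only [one_div, Finset.prod_inv_distrib, hprod]
      rw [Real.finset_prod_rpow _ _ (fun i _ => one_div_nonneg.2 (hxpos i).le), hp,
        Real.inv_rpow ht0.le, ← Real.rpow_neg ht0.le]
    rw [hgm, ← Finset.mul_sum] at amgm
    have hsum : ((k : ℝ) - 1) * t ^ (-c) ≤ ∑ m, 1 / x m := by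
      have := mul_le_mul_of_nonneg_left amgm hnR.le
      rw [← mul_assoc, hc, mul_one_div_cancel hnR.ne', one_mul] at this
      linarith
    have hsum' : ((k : ℝ) - 1) * t ^ (1 - c) ≤ (∑ m, 1 / x m) * t := by
      calc ((k : ℝ) - 1) * t ^ (1 - c) = (((k : ℝ) - 1) * t ^ (-c)) * t := by
            rw [mul_assoc, mul_comm (t ^ (-c)) t, htc]
        _ ≤ (∑ m, 1 / x m) * t := by
            exact mul_le_mul_of_nonneg_right hsum ht0.le
    rw [hprod, hB, add_mul]
    linarith
  have hBmem : B ∈ S := by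
    refine ⟨fun _ => t ^ c, fun m => ⟨Real.rpow_pos_of_pos ht0 c, ?_⟩, hrpow_prod, ?_⟩
    · exact Real.rpow_le_one ht.1 ht.2 hc0
    · rw [hrpow_prod]
      have hsum : ∑ _m : Fin (k - 1), (1 : ℝ) / t ^ c = ((k : ℝ) - 1) * t ^ (-c) := by
        rw [Finset.sum_const, Finset.card_univ, Fintype.card_fin, nsmul_eq_mul, hncast,
          one_div, ← Real.rpow_neg ht0.le]
      rw [hsum, hB, add_mul, mul_assoc, mul_comm (t ^ (-c)) t, htc]
      ring
  constructor
  · exact le_antisymm (csSup_le ⟨1, h1⟩ hub) (le_csSup ⟨1, hub⟩ h1)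
  · exact le_antisymm (csInf_le ⟨B, hlb⟩ hBmem) (le_csInf ⟨1, h1⟩ hlb)
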